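/- Let U, V ⊆ ℝ² be open, let γ : V → U be a C¹ bijection with det(Dγ(s)) > 0 for all s ∈ V, let f : U → ℝ³ be C¹ with g = g_f invertible on U, let n : U → ℝ³ be a C¹ vector field with n·fᵤ = n·fᵥ = 0 on U, and let h : U → ℝ be C¹. Fix a, b, c ∈ ℝ. Define on U: II = −(Dn)ᵀ(Df), H = ½ Tr(g⁻¹ II), K = det(g⁻¹ II), and ∇h = (∂ᵤh, ∂ᵥh) ∈ ℝ²; define the corresponding quantities g̃, H̃, K̃, ∇h̃ on V from f̃ = f∘γ, ñ = n∘γ, h̃ = h∘γ. If the function x ↦ (det g)^{1/2} ( h²(8a(H² − K) + 16bH²) + c (∇h)ᵀ g⁻¹ ∇h )(x) is Lebesgue integrable on U, then ∫_V (det g̃)^{1/2} ( h̃² (8a(H̃² − K̃) + 16b H̃²) + c (∇h̃)ᵀ g̃⁻¹ ∇h̃ ) ds = ∫_U (det g)^{1/2} ( h²(8a(H² − K) + 16bH²) + c (∇h)ᵀ g⁻¹ ∇h ) dx. (This is the reparameterization invariance of the elastic metric restricted to normal vector fields h·n, whose integrand equals |g|^{1/2}( h²(2a(κ₁−κ₂)²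 + 4b(κ₁+κ₂)²) + c ∇hᵀ g⁻¹ ∇h ) in terms of the principal curvatures κ₁, κ₂, since (κ₁−κ₂)² = 4(H²−K) and (κ₁+κ₂)² = 4H².) -/

import Mathlib

open Matrix MeasureTheory

noncomputable section

/-- Partial derivative of a map from ℝ² in direction `i` (image of `eᵢ` under the Fréchet derivative). -/
def pd (f : (Fin 2 → ℝ) → (Fin 3 → ℝ)) (x : Fin 2 → ℝ) (i : Fin 2) : Fin 3 → ℝ :=
  fderiv ℝ f x (Pi.single i 1)

/-- Jacobian matrix of a map ℝ² → ℝ². -/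
def Jmat (γ : (Fin 2 → ℝ) → (Fin 2 → ℝ)) (s : Fin 2 → ℝ) : Matrix (Fin 2) (Fin 2) ℝ :=
  Matrix.of fun i j => fderiv ℝ γ s (Pi.single j 1) i

/-- First fundamental form (Gram matrix of the partial derivatives) of a parameterized surface. -/
def gmat (f : (Fin 2 → ℝ) → (Fin 3 → ℝ)) (x : Fin 2 → ℝ) : Matrix (Fin 2) (Fin 2) ℝ :=
  Matrix.of fun i j => pd f x i ⬝ᵥ pd f x j

/-- Second fundamental form matrix of a pair (surface, normal field): `II = −(Dn)ᵀ(Df)`. -/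
def IImat (f n : (Fin 2 → ℝ) → (Fin 3 → ℝ)) (x : Fin 2 → ℝ) : Matrix (Fin 2) (Fin 2) ℝ :=
  Matrix.of fun i j => -(pd n x i ⬝ᵥ pd f x j)

/-- Mean curvature `H = ½ Tr(g⁻¹ II)`. -/
def meanCurv (f n : (Fin 2 → ℝ) → (Fin 3 → ℝ)) (x : Fin 2 → ℝ) : ℝ :=
  1 / 2 * ((gmat f x)⁻¹ * IImat f n x).trace

/-- Gauss curvature `K = det(g⁻¹ II)`. -/
def gaussCurv (f n : (Fin 2 → ℝ) → (Fin 3 → ℝ)) (x : Fin 2 → ℝ) : ℝ :=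
  ((gmat f x)⁻¹ * IImat f n x).det

/-- Gradient (vector of partial derivatives) of a scalar function on ℝ². -/
def gradh (h : (Fin 2 → ℝ) → ℝ) (x : Fin 2 → ℝ) : Fin 2 → ℝ :=
  fun i => fderiv ℝ h x (Pi.single i 1)

/-- Integrand of the elastic metric restricted to normal vector fields `h·n`:
`|g|^{1/2} ( h²(8a(H² − K) + 16bH²) + c ∇hᵀ g⁻¹ ∇h )`. -/
def normalElasticIntegrand (f n : (Fin 2 → ℝ) → (Fin 3 → ℝ)) (h : (Fin 2 → ℝ) → ℝ)
    (a b c : ℝ) (x : Fin 2 → ℝ) : ℝ :=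
  Real.sqrt (gmat f x).det *
    ((h x) ^ 2 * (8 * a * (meanCurv f n x ^ 2 - gaussCurv f n x)
        + 16 * b * meanCurv f n x ^ 2)
      + c * (gradh h x ⬝ᵥ ((gmat f x)⁻¹ *ᵥ gradh h x)))

lemma clm_apply_eq_sum {E : Type*} [NormedAddCommGroup E] [NormedSpace ℝ E]
    (L : (Fin 2 → ℝ) →L[ℝ] E) (w : Fin 2 → ℝ) :
    L w = ∑ j, w j • L (Pi.single j 1) := by
  have hw : w = ∑ j, w j • (Pi.single j 1 : Fin 2 → ℝ) := by
    conv_lhs => rw [← Finset.univ_sum_single w]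
    refine Finset.sum_congr rfl fun j _ => ?_
    rw [← Pi.single_smul, smul_eq_mul, mul_one]
  conv_lhs => rw [hw]
  simp [map_sum]

lemma mat_key (J g II : Matrix (Fin 2) (Fin 2) ℝ) (v : Fin 2 → ℝ)
    (hJ : IsUnit J.det) :
    ((Jᵀ * g * J)⁻¹ * (Jᵀ * II * J)).trace = (g⁻¹ * II).trace ∧
    ((Jᵀ * g * J)⁻¹ * (Jᵀ * II * J)).det = (g⁻¹ * II).det ∧
    ((Jᵀ *ᵥ v) ⬝ᵥ ((Jᵀ * g * J)⁻¹ *ᵥ (Jᵀ *ᵥ v))) = v ⬝ᵥ (g⁻¹ *ᵥ v) := by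
  have hJT : IsUnit Jᵀ.det := by simpa using hJ
  have hinv : (Jᵀ * g * J)⁻¹ = J⁻¹ * (g⁻¹ * (Jᵀ)⁻¹) := by
    rw [Matrix.mul_inv_rev, Matrix.mul_inv_rev]
  have key : (Jᵀ * g * J)⁻¹ * (Jᵀ * II * J) = J⁻¹ * ((g⁻¹ * II) * J) := by
    rw [hinv]
    simp only [Matrix.mul_assoc]
    rw [← Matrix.mul_assoc (Jᵀ)⁻¹ Jᵀ, Matrix.nonsing_inv_mul _ hJT, Matrix.one_mul]
  refine ⟨?_, ?_, ?_⟩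
  · rw [key, ← Matrix.mul_assoc, Matrix.trace_mul_comm, ← Matrix.mul_assoc,
      Matrix.mul_nonsing_inv _ hJ, Matrix.one_mul]
  · rw [key, Matrix.det_mul, Matrix.det_mul, Matrix.det_nonsing_inv]
    have h0 : J.det ≠ 0 := hJ.ne_zero
    rw [Ring.inverse_eq_inv', mul_comm _ J.det, ← mul_assoc, inv_mul_cancel₀ h0, one_mul]
  · have h1 : (Jᵀ * g * J)⁻¹ *ᵥ (Jᵀ *ᵥ v) = J⁻¹ *ᵥ (g⁻¹ *ᵥ v) := by
      rw [hinv, Matrix.mulVec_mulVec]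
      simp only [Matrix.mul_assoc]
      rw [Matrix.nonsing_inv_mul _ hJT, Matrix.mul_one, ← Matrix.mulVec_mulVec]
    rw [h1, Matrix.mulVec_transpose, ← Matrix.dotProduct_mulVec, Matrix.mulVec_mulVec,
      Matrix.mul_nonsing_inv _ hJ, Matrix.one_mulVec]

theorem stmt19 (U V : Set (Fin 2 → ℝ)) (hU : IsOpen U) (hV : IsOpen V)
    (γ : (Fin 2 → ℝ) → (Fin 2 → ℝ)) (f n : (Fin 2 → ℝ) → (Fin 3 → ℝ))
    (h : (Fin 2 → ℝ) → ℝ) (a b c : ℝ)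
    (hγ : ContDiffOn ℝ 1 γ V) (hbij : Set.BijOn γ V U)
    (hdet : ∀ s ∈ V, 0 < (Jmat γ s).det)
    (hf : ContDiffOn ℝ 1 f U) (hg : ∀ x ∈ U, IsUnit (gmat f x))
    (hnC : ContDiffOn ℝ 1 n U)
    (hortho : ∀ x ∈ U, n x ⬝ᵥ pd f x 0 = 0 ∧ n x ⬝ᵥ pd f x 1 = 0)
    (hh : ContDiffOn ℝ 1 h U)
    (hint : IntegrableOn (normalElasticIntegrand f n h a b c) U) :
    ∫ s in V, normalElasticIntegrand (f ∘ γ) (n ∘ γ) (h ∘ γ) a b c s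
      = ∫ x in U, normalElasticIntegrand f n h a b c x := by
  have himg : γ '' V = U := hbij.image_eq
  have hdiffγ : ∀ s ∈ V, DifferentiableAt ℝ γ s := fun s hs =>
    (hγ.contDiffAt (hV.mem_nhds hs)).differentiableAt one_ne_zero
  have hCoV : ∫ x in U, normalElasticIntegrand f n h a b c x
      = ∫ s in V, |(fderiv ℝ γ s).det| •
          normalElasticIntegrand f n h a b c (γ s) := by
    rw [← himg]
    exact integral_image_eq_integral_abs_det_fderiv_smul volume hV.measurableSet
      (fun s hs => ((hdiffγ s hs).hasFDerivAt).hasFDerivWithinAt) hbij.injOn _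
  rw [hCoV]
  refine setIntegral_congr_fun hV.measurableSet fun s hs => ?_
  -- setup
  set x := γ s with hxdef
  have hx : x ∈ U := hbij.mapsTo hs
  have hγd : DifferentiableAt ℝ γ s := hdiffγ s hs
  have hfd : DifferentiableAt ℝ f x := (hf.contDiffAt (hU.mem_nhds hx)).differentiableAt one_ne_zero
  have hnd : DifferentiableAt ℝ n x := (hnC.contDiffAt (hU.mem_nhds hx)).differentiableAt one_ne_zero
  have hhd : DifferentiableAt ℝ h x := (hh.contDiffAt (hU.mem_nhds hx)).differentiableAt one_ne_zero
  set J := Jmat γ s with hJdef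
  -- det of fderiv equals det of Jmat
  have hdetJ : (fderiv ℝ γ s).det = J.det := by
    have : J = LinearMap.toMatrix' (fderiv ℝ γ s : (Fin 2 → ℝ) →ₗ[ℝ] (Fin 2 → ℝ)) := by
      ext i j
      rw [LinearMap.toMatrix'_apply]
      have harg : (Pi.single j 1 : Fin 2 → ℝ) = fun j' => if j' = j then 1 else 0 := by
        funext j'
        rcases eq_or_ne j' j with rfl | hne
        · simp
        · simp [Pi.single_apply, hne]
      show (fderiv ℝ γ s) (Pi.single j 1) i = _
      rw [harg]
      rfl
    rw [this, LinearMap.det_toMatrix']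
  have hJu : IsUnit J.det := (hdet s hs).ne'.isUnit
  -- chain rule for pd
  have hpd : ∀ (F : (Fin 2 → ℝ) → (Fin 3 → ℝ)), DifferentiableAt ℝ F x →
      ∀ i, pd (F ∘ γ) s i = ∑ j, J j i • pd F x j := by
    intro F hFd i
    unfold pd
    rw [fderiv_comp s (by exact hFd) hγd,
      ContinuousLinearMap.comp_apply, clm_apply_eq_sum]
    rfl
  have hpdf := hpd f hfd
  have hpdn := hpd n hnd
  -- chain rule for gradh
  have hgrad : gradh (h ∘ γ) s = Jᵀ *ᵥ gradh h x := by
    funext i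
    show fderiv ℝ (h ∘ γ) s (Pi.single i 1) = _
    rw [fderiv_comp s (by exact hhd) hγd, ContinuousLinearMap.comp_apply,
      clm_apply_eq_sum]
    simp [Matrix.mulVec, dotProduct, hJdef, Jmat, gradh, mul_comm]
    rfl
  -- transformation of gmat
  have hgm : gmat (f ∘ γ) s = Jᵀ * gmat f x * J := by
    ext i j
    simp only [gmat, Matrix.of_apply, hpdf, Matrix.mul_apply, Matrix.transpose_apply,
      dotProduct, Finset.sum_apply, Pi.smul_apply, smul_eq_mul]
    simp only [Fin.sum_univ_two, Fin.sum_univ_three]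
    ring
  have hIIm : IImat (f ∘ γ) (n ∘ γ) s = Jᵀ * IImat f n x * J := by
    ext i j
    simp only [IImat, Matrix.of_apply, hpdf, hpdn, Matrix.mul_apply, Matrix.transpose_apply,
      dotProduct, Finset.sum_apply, Pi.smul_apply, smul_eq_mul]
    simp only [Fin.sum_univ_two, Fin.sum_univ_three]
    ring
  obtain ⟨htr, hdt, hquad⟩ := mat_key J (gmat f x) (IImat f n x) (gradh h x) hJu
  have hH : meanCurv (f ∘ γ) (n ∘ γ) s = meanCurv f n x := by
    unfold meanCurv; rw [hgm, hIIm, htr]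
  have hK : gaussCurv (f ∘ γ) (n ∘ γ) s = gaussCurv f n x := by
    unfold gaussCurv; rw [hgm, hIIm, hdt]
  have hQ : gradh (h ∘ γ) s ⬝ᵥ ((gmat (f ∘ γ) s)⁻¹ *ᵥ gradh (h ∘ γ) s)
      = gradh h x ⬝ᵥ ((gmat f x)⁻¹ *ᵥ gradh h x) := by
    rw [hgrad, hgm, hquad]
  have hsqrt : Real.sqrt (gmat (f ∘ γ) s).det = |J.det| * Real.sqrt (gmat f x).det := by
    rw [hgm]
    have : (Jᵀ * gmat f x * J).det = J.det ^ 2 * (gmat f x).det := by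
      simp [Matrix.det_mul, Matrix.det_transpose]; ring
    rw [this, Real.sqrt_mul (sq_nonneg _), Real.sqrt_sq_eq_abs]
  show normalElasticIntegrand (f ∘ γ) (n ∘ γ) (h ∘ γ) a b c s = _
  unfold normalElasticIntegrand
  rw [hH, hK, hQ, hsqrt, hdetJ, smul_eq_mul]
  show |J.det| * Real.sqrt (gmat f x).det * _ = _
  rw [Function.comp_apply, ← hxdef]
  ring
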